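/- arXiv:2011.10951 — 5 statements merged into one kernel-verified Lean document; each statement's English description precedes it below -/
import Mathlib

section
/- Let n > 2, let t ∈ {1,…,n}, let p_t ∈ (0,1), and let q ∈ ℝ^n satisfy q_i ∈ (0,1) for all i and Σ_{i≠t} q_i = 1 − q_t. Then the supremum of D_CE(p‖q) over the open action set A_P = {p ∈ ℝ^n : p_i ∈ (0,1) for all i, p_t at index t, Σ_{i≠t} p_i = 1 − p_t} equals −p_t log q_t − (1−p_t) log(min_{i≠t} q_i). -/
open Finset

/-- Cross entropy `D_CE(p‖q) = -∑ i, p i * log (q i)` (with the convention `0 * log x = 0`,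
which holds automatically for real multiplication). -/
noncomputable def DCE {n : ℕ} (p q : Fin n → ℝ) : ℝ :=
  -∑ i, p i * Real.log (q i)

/-- The minimum of `q` over the non-target coordinates `i ≠ t`. -/
noncomputable def minNT {n : ℕ} (hn : 2 < n) (t : Fin n) (q : Fin n → ℝ) : ℝ :=
  (Finset.univ.erase t).inf'
    (by
      obtain ⟨b, hb⟩ := Fintype.exists_ne_of_one_lt_card
        (by rw [Fintype.card_fin]; omega) t
      exact ⟨b, Finset.mem_erase.mpr ⟨hb, Finset.mem_univ b⟩⟩)
    q


theorem statement_2 (n : ℕ) (hn : 2 < n) (t : Fin n)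
    (pt : ℝ) (hpt : pt ∈ Set.Ioo (0 : ℝ) 1)
    (q : Fin n → ℝ) (hq : ∀ i, q i ∈ Set.Ioo (0 : ℝ) 1)
    (hqsum : ∑ i ∈ Finset.univ.erase t, q i = 1 - q t) :
    IsLUB ((fun p => DCE p q) ''
        {p : Fin n → ℝ | (∀ i, p i ∈ Set.Ioo (0 : ℝ) 1) ∧ p t = pt ∧
          ∑ i ∈ Finset.univ.erase t, p i = 1 - pt})
      (-pt * Real.log (q t) - (1 - pt) * Real.log (minNT hn t q)) := by
  have hne : (Finset.univ.erase t).Nonempty := by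
    obtain ⟨b, hb⟩ := Fintype.exists_ne_of_one_lt_card
      (by rw [Fintype.card_fin]; omega) t
    exact ⟨b, Finset.mem_erase.mpr ⟨hb, Finset.mem_univ b⟩⟩
  obtain ⟨j, hjmem, hjq⟩ := Finset.exists_mem_eq_inf' hne q
  have hjt : j ≠ t := (Finset.mem_erase.mp hjmem).1
  set m : ℝ := minNT hn t q with hmdef
  have hm_eq : m = q j := hjq
  have hm_pos : 0 < m := hm_eq ▸ (hq j).1
  have hm_le : ∀ i ∈ Finset.univ.erase t, m ≤ q i := fun i hi => Finset.inf'_le q hi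
  set L : ℝ := -pt * Real.log (q t) - (1 - pt) * Real.log m with hLdef
  set T : Finset (Fin n) := (Finset.univ.erase t).erase j with hTdef
  have hc3 : (3 : ℝ) ≤ (n : ℝ) := by exact_mod_cast hn
  have hcardT : (T.card : ℝ) = (n : ℝ) - 2 := by
    have h1 : (Finset.univ.erase t).card = n - 1 := by
      rw [Finset.card_erase_of_mem (Finset.mem_univ t), Finset.card_univ, Fintype.card_fin]
    have h2 : T.card = n - 2 := by
      rw [hTdef, Finset.card_erase_of_mem hjmem, h1]; omega
    rw [h2, Nat.cast_sub (by omega : 2 ≤ n)]; norm_num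
  have hpt1 : 0 < 1 - pt := by linarith [hpt.2]
  constructor
  · -- upper bound
    rintro x ⟨p, ⟨hp1, hp2, hp3⟩, rfl⟩
    have hsum1 : ∑ i ∈ Finset.univ.erase t, p i * Real.log m = (1 - pt) * Real.log m := by
      rw [← Finset.sum_mul, hp3]
    have hsum2 : ∑ i ∈ Finset.univ.erase t, p i * Real.log m
        ≤ ∑ i ∈ Finset.univ.erase t, p i * Real.log (q i) := by
      apply Finset.sum_le_sum
      intro i hi
      exact mul_le_mul_of_nonneg_left
        (Real.log_le_log hm_pos (hm_le i hi)) (le_of_lt (hp1 i).1)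
    have htot : ∑ i, p i * Real.log (q i)
        = pt * Real.log (q t) + ∑ i ∈ Finset.univ.erase t, p i * Real.log (q i) := by
      rw [← Finset.add_sum_erase _ _ (Finset.mem_univ t), hp2]
    simp only [DCE]
    rw [htot]
    rw [hsum1] at hsum2
    simp only [hLdef]
    linarith
  · -- least upper bound
    rintro b hb
    set c : ℝ := (n : ℝ) - 2 with hcdef
    set Sg : ℝ := ∑ i ∈ T, Real.log (q i) with hSgdef
    have hc_nonneg : 0 ≤ c := by rw [hcdef]; linarith
    have key : ∀ ε : ℝ, 0 < ε → ε < (1 - pt) / (2 * n) →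
        L + ε * (c * Real.log m - Sg) ≤ b := by
      intro ε hε hε'
      set p : Fin n → ℝ := fun i => if i = t then pt else if i = j then (1 - pt) - c * ε else ε
        with hpdef
      have hpt' : p t = pt := by simp [hpdef]
      have hpj : p j = (1 - pt) - c * ε := by simp [hpdef, hjt]
      have hpT : ∀ i ∈ T, p i = ε := by
        intro i hi
        have hi1 : i ≠ j := (Finset.mem_erase.mp hi).1
        have hi2 : i ≠ t := (Finset.mem_erase.mp (Finset.mem_erase.mp hi).2).1
        simp [hpdef, hi1, hi2]
      have hcε : c * ε < 1 - pt := by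
        have hc_lt : c < 2 * n := by rw [hcdef]; linarith
        calc c * ε ≤ c * ((1 - pt) / (2 * n)) := by nlinarith
          _ < (2 * n) * ((1 - pt) / (2 * n)) := by
              apply mul_lt_mul_of_pos_right hc_lt; positivity
          _ = 1 - pt := by field_simp
      have hε1 : ε < 1 := by
        have h2n : (1 - pt) / (2 * n) < 1 := by
          rw [div_lt_one (by positivity)]; linarith [hpt.1]
        linarith
      have hmem : ∀ i, p i ∈ Set.Ioo (0 : ℝ) 1 := by
        intro i
        by_cases hit : i = t
        · rw [hit, hpt']; exact hpt
        · by_cases hij : i = j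
          · rw [hij, hpj]
            constructor
            · linarith
            · linarith [mul_nonneg hc_nonneg hε.le, hpt.1]
          · have : p i = ε := by simp [hpdef, hit, hij]
            rw [this]; exact ⟨hε, hε1⟩
      have hsumT : ∑ i ∈ T, p i = c * ε := by
        rw [Finset.sum_congr rfl hpT, Finset.sum_const, nsmul_eq_mul, hcardT, hcdef]
      have hsum : ∑ i ∈ Finset.univ.erase t, p i = 1 - pt := by
        rw [← Finset.add_sum_erase _ p hjmem, hpj, ← hTdef, hsumT]; ring
      have hval : DCE p q = L + ε * (c * Real.log m - Sg) := by
        simp only [DCE]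
        have hs : ∑ i, p i * Real.log (q i)
            = p t * Real.log (q t) + (p j * Real.log (q j) + ∑ i ∈ T, p i * Real.log (q i)) := by
          rw [hTdef, Finset.add_sum_erase _ (fun i => p i * Real.log (q i)) hjmem,
            Finset.add_sum_erase _ (fun i => p i * Real.log (q i)) (Finset.mem_univ t)]
        have hTsum : ∑ i ∈ T, p i * Real.log (q i) = ε * Sg := by
          rw [hSgdef, Finset.mul_sum]
          exact Finset.sum_congr rfl fun i hi => by rw [hpT i hi]
        rw [hs, hpt', hpj, hTsum, hLdef, hm_eq]
        ring
      have hx : DCE p q ∈ ((fun p => DCE p q) ''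
          {p : Fin n → ℝ | (∀ i, p i ∈ Set.Ioo (0 : ℝ) 1) ∧ p t = pt ∧
            ∑ i ∈ Finset.univ.erase t, p i = 1 - pt}) :=
        ⟨p, ⟨hmem, hpt', hsum⟩, rfl⟩
      have hle := hb hx
      rw [hval] at hle
      exact hle
    set C : ℝ := c * Real.log m - Sg with hCdef
    refine le_of_forall_pos_le_add ?_
    intro δ hδ
    have hnpos : (0 : ℝ) < n := by linarith
    set ε : ℝ := min ((1 - pt) / (4 * n)) (δ / (|C| + 1)) with hεdef
    have habs : (0 : ℝ) < |C| + 1 := by positivity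
    have hεpos : 0 < ε := lt_min (by positivity) (by positivity)
    have hεlt : ε < (1 - pt) / (2 * n) := by
      have h4 : (1 - pt) / (4 * n) < (1 - pt) / (2 * n) :=
        div_lt_div_of_pos_left hpt1 (by positivity) (by linarith)
      exact lt_of_le_of_lt (min_le_left _ _) h4
    have h1 := key ε hεpos hεlt
    have h2 : ε * (|C| + 1) ≤ δ := by
      have hle2 : ε ≤ δ / (|C| + 1) := min_le_right _ _
      calc ε * (|C| + 1) ≤ (δ / (|C| + 1)) * (|C| + 1) := by nlinarith
        _ = δ := by field_simp
    have h2' : ε * |C| ≤ δ := by nlinarith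
    have h3 : -(ε * C) ≤ ε * |C| := by nlinarith [neg_abs_le C, hεpos.le]
    linarith
end

section
/- Let n > 2, let t ∈ {1,…,n}, let p_t, q_t ∈ (0,1), and let q ∈ ℝ^n with q_i ∈ (0,1) for all i, q at index t equal to q_t, and Σ_{i≠t} q_i = 1 − q_t. Then −p_t log q_t − (1−p_t) log(min_{i≠t} q_i) = −p_t log q_t − (1−p_t) log((1−q_t)/(n−1)) if and only if q_i = (1−q_t)/(n−1) for all i ≠ t; i.e., the uniform non-target distribution is the unique minimizer of the worst-case cross-entropy loss over A_Q. -/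
open Finset

theorem statement_4 (n : ℕ) (hn : 2 < n) (t : Fin n)
    (pt qt : ℝ) (hpt : pt ∈ Set.Ioo (0 : ℝ) 1) (hqt : qt ∈ Set.Ioo (0 : ℝ) 1)
    (q : Fin n → ℝ) (hq : ∀ i, q i ∈ Set.Ioo (0 : ℝ) 1)
    (hqtt : q t = qt)
    (hqsum : ∑ i ∈ Finset.univ.erase t, q i = 1 - qt) :
    -pt * Real.log qt - (1 - pt) * Real.log (minNT hn t q) =
      -pt * Real.log qt - (1 - pt) * Real.log ((1 - qt) / ((n : ℝ) - 1)) ↔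
    ∀ i, i ≠ t → q i = (1 - qt) / ((n : ℝ) - 1) := by
  have hne : (Finset.univ.erase t).Nonempty := by
    obtain ⟨b, hb⟩ := Fintype.exists_ne_of_one_lt_card
      (by rw [Fintype.card_fin]; omega) t
    exact ⟨b, Finset.mem_erase.mpr ⟨hb, Finset.mem_univ b⟩⟩
  have hcard : ((Finset.univ.erase t).card : ℝ) = (n : ℝ) - 1 := by
    rw [Finset.card_erase_of_mem (Finset.mem_univ t), Finset.card_univ, Fintype.card_fin]
    push_cast [Nat.cast_sub (by omega : 1 ≤ n)]
    ring
  have hn1 : (0 : ℝ) < (n : ℝ) - 1 := by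
    have : (2 : ℝ) < n := by exact_mod_cast hn
    linarith
  have hupos : 0 < (1 - qt) / ((n : ℝ) - 1) := div_pos (by linarith [hqt.2]) hn1
  have hmpos : 0 < minNT hn t q := by
    obtain ⟨i, hi, hiq⟩ := Finset.exists_mem_eq_inf' hne q
    rw [minNT]
    exact hiq ▸ (hq i).1
  constructor
  · intro h
    have hpt1 : (1 : ℝ) - pt ≠ 0 := by linarith [hpt.2]
    have hlog : Real.log (minNT hn t q) = Real.log ((1 - qt) / ((n : ℝ) - 1)) := by
      have h' : (1 - pt) * Real.log (minNT hn t q) =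
          (1 - pt) * Real.log ((1 - qt) / ((n : ℝ) - 1)) := by linarith
      exact mul_left_cancel₀ hpt1 h'
    have hmeq : minNT hn t q = (1 - qt) / ((n : ℝ) - 1) :=
      Real.log_injOn_pos (Set.mem_Ioi.mpr hmpos) (Set.mem_Ioi.mpr hupos) hlog
    -- each q i ≥ min = uniform, sums agree, so all equal
    intro i hi
    by_contra hne'
    have hmem : i ∈ Finset.univ.erase t := Finset.mem_erase.mpr ⟨hi, Finset.mem_univ i⟩
    have hge : ∀ j ∈ Finset.univ.erase t, (1 - qt) / ((n : ℝ) - 1) ≤ q j := by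
      intro j hj
      rw [← hmeq]
      exact Finset.inf'_le _ hj
    have hgt : (1 - qt) / ((n : ℝ) - 1) < q i := lt_of_le_of_ne (hge i hmem) (Ne.symm hne')
    have hsum : ∑ j ∈ Finset.univ.erase t, (1 - qt) / ((n : ℝ) - 1) <
        ∑ j ∈ Finset.univ.erase t, q j :=
      Finset.sum_lt_sum hge ⟨i, hmem, hgt⟩
    rw [Finset.sum_const, nsmul_eq_mul, hcard, hqsum] at hsum
    rw [mul_div_cancel₀ _ (ne_of_gt hn1)] at hsum
    exact lt_irrefl _ hsum
  · intro h
    have : minNT hn t q = (1 - qt) / ((n : ℝ) - 1) := by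
      rw [minNT]
      apply le_antisymm
      · obtain ⟨i, hi⟩ := hne
        calc _ ≤ q i := Finset.inf'_le _ hi
          _ = _ := h i (Finset.mem_erase.mp hi).1
      · apply Finset.le_inf'
        intro j hj
        rw [h j (Finset.mem_erase.mp hj).1]
    rw [this]
end

section
/- Let n > 2, let t ∈ {1,…,n}, let p_t, q_t ∈ (0,1). For each k ≠ t let p^(k) ∈ ℝ^n be defined by p^(k)_t = p_t, p^(k)_k = 1 − p_t, and p^(k)_i = 0 otherwise, and let q* ∈ ℝ^n be defined by q*_t = q_t and q*_i = (1−q_t)/(n−1) for i ≠ t. Then for every q ∈ ℝ^n with q_i ∈ (0,1) for all i, q at index t equal to q_t, and Σ_{i≠t} q_i = 1 − q_t, the expected loss against the uniform mixed adversary satisfies (1/(n−1)) Σ_{k≠t} D_CE(p^(k)‖q) ≥ (1/(n−1)) Σ_{k≠t} D_CE(p^(k)‖q*); that is, q* is a best response of the model to the adversary's uniform mixed strategy over {p^(k) : k ≠ t}. -/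
open Finset

theorem statement_5 (n : ℕ) (hn : 2 < n) (t : Fin n)
    (pt qt : ℝ) (hpt : pt ∈ Set.Ioo (0 : ℝ) 1) (hqt : qt ∈ Set.Ioo (0 : ℝ) 1)
    (pvec : Fin n → Fin n → ℝ)
    (hpvec : pvec = fun k i => if i = t then pt else if i = k then 1 - pt else 0)
    (qstar : Fin n → ℝ)
    (hqstar : qstar = fun i => if i = t then qt else (1 - qt) / ((n : ℝ) - 1))
    (q : Fin n → ℝ) (hq : ∀ i, q i ∈ Set.Ioo (0 : ℝ) 1)
    (hqtt : q t = qt)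
    (hqsum : ∑ i ∈ Finset.univ.erase t, q i = 1 - qt) :
    (1 / ((n : ℝ) - 1)) * ∑ k ∈ Finset.univ.erase t, DCE (pvec k) q ≥
      (1 / ((n : ℝ) - 1)) * ∑ k ∈ Finset.univ.erase t, DCE (pvec k) qstar := by
  have hn1 : (1 : ℝ) < (n : ℝ) := by exact_mod_cast (by omega : 1 < n)
  have hn1' : (0 : ℝ) < (n : ℝ) - 1 := by linarith
  set c : ℝ := (1 - qt) / ((n : ℝ) - 1) with hc
  have hcpos : 0 < c := div_pos (by linarith [hqt.2]) hn1'
  have hcard : ((Finset.univ.erase t).card : ℝ) = (n : ℝ) - 1 := by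
    rw [Finset.card_erase_of_mem (Finset.mem_univ t), Finset.card_univ, Fintype.card_fin]
    rw [Nat.cast_sub (by omega)]; simp
  -- key: DCE formula
  have key : ∀ k : Fin n, k ≠ t → ∀ r : Fin n → ℝ,
      DCE (pvec k) r = -(pt * Real.log (r t) + (1 - pt) * Real.log (r k)) := by
    intro k hk r
    simp only [DCE, hpvec]
    rw [← Finset.sum_subset (Finset.subset_univ ({t, k} : Finset (Fin n)))]
    · rw [Finset.sum_pair (Ne.symm hk)]
      simp [hk]
    · intro i _ hi
      simp only [Finset.mem_insert, Finset.mem_singleton, not_or] at hi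
      simp [hi.1, hi.2]
  -- log inequality: sum of logs bounded
  have hlog : ∑ k ∈ Finset.univ.erase t, Real.log (q k)
      ≤ ∑ k ∈ Finset.univ.erase t, Real.log c := by
    have hstep : ∀ k ∈ Finset.univ.erase t,
        Real.log (q k) ≤ Real.log c + (q k / c - 1) := by
      intro k hk
      have hqk : 0 < q k := (hq k).1
      have := Real.log_le_sub_one_of_pos (div_pos hqk hcpos)
      rw [Real.log_div (ne_of_gt hqk) (ne_of_gt hcpos)] at this
      linarith
    calc ∑ k ∈ Finset.univ.erase t, Real.log (q k)
        ≤ ∑ k ∈ Finset.univ.erase t, (Real.log c + (q k / c - 1)) :=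
          Finset.sum_le_sum hstep
      _ = ∑ k ∈ Finset.univ.erase t, Real.log c := by
          rw [Finset.sum_add_distrib, Finset.sum_sub_distrib]
          have : ∑ k ∈ Finset.univ.erase t, q k / c = (1 - qt) / c := by
            rw [← Finset.sum_div, hqsum]
          rw [this]
          have h1q : (1:ℝ) - qt ≠ 0 := by linarith [hqt.2]
          have hcc : (1 - qt) / c = (n : ℝ) - 1 := by
            rw [hc]; field_simp
          rw [hcc, Finset.sum_const, Finset.sum_const, nsmul_eq_mul, nsmul_eq_mul, hcard]
          ring
  -- rewrite both sums
  have hsumq : ∑ k ∈ Finset.univ.erase t, DCE (pvec k) q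
      = -(((n:ℝ)-1) * (pt * Real.log qt) + (1 - pt) * ∑ k ∈ Finset.univ.erase t, Real.log (q k)) := by
    rw [Finset.sum_congr rfl (fun k hk => key k (Finset.mem_erase.mp hk).1 q)]
    simp only [neg_add_rev, Finset.sum_add_distrib, Finset.sum_neg_distrib]
    rw [Finset.sum_const, ← Finset.mul_sum, nsmul_eq_mul, hcard, hqtt]
  have hsumqs : ∑ k ∈ Finset.univ.erase t, DCE (pvec k) qstar
      = -(((n:ℝ)-1) * (pt * Real.log qt) + (1 - pt) * (((n:ℝ)-1) * Real.log c)) := by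
    have hqst : qstar t = qt := by rw [hqstar]; simp
    have hqsk : ∀ k ∈ Finset.univ.erase t, Real.log (qstar k) = Real.log c := by
      intro k hk
      rw [hqstar]; simp [(Finset.mem_erase.mp hk).1]
    rw [Finset.sum_congr rfl
      (fun k hk => by rw [key k (Finset.mem_erase.mp hk).1 qstar, hqst, hqsk k hk])]
    rw [Finset.sum_const, nsmul_eq_mul, hcard]
    ring
  rw [ge_iff_le, hsumq, hsumqs]
  have hfac : (0:ℝ) < 1 / ((n:ℝ)-1) := by positivity
  apply mul_le_mul_of_nonneg_left _ (le_of_lt hfac)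
  have h1pt : 0 < 1 - pt := by linarith [hpt.2]
  rw [Finset.sum_const, nsmul_eq_mul, hcard] at hlog
  nlinarith [mul_le_mul_of_nonneg_left hlog (le_of_lt h1pt)]
end

section
/- Let n > 2, let t ∈ {1,…,n}, let p_t, q_t ∈ (0,1). For each k ≠ t define p^(k) ∈ ℝ^n by p^(k)_t = p_t, p^(k)_k = 1 − p_t, p^(k)_i = 0 otherwise, and define q* ∈ ℝ^n by q*_t = q_t, q*_i = (1−q_t)/(n−1) for i ≠ t. Then the pair (s_P*, s_Q*), where s_P* is the uniform mixed strategy over {p^(k) : k ≠ t} and s_Q* is the pure strategy q*, is a Nash equilibrium of the zero-sum game with payoff D_CE to the adversary: (i) for every q ∈ A_Q, (1/(n−1)) Σ_{k≠t} D_CE(p^(k)‖q) ≥ (1/(n−1)) Σ_{k≠t} D_CE(p^(k)‖q*), and (ii) for every p in the adversary's action set, D_CE(p‖q*) ≤ (1/(n−1)) Σ_{k≠t} D_CE(p^(k)‖q*). -/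
open Finset

theorem statement_7 (n : ℕ) (hn : 2 < n) (t : Fin n)
    (pt qt : ℝ) (hpt : pt ∈ Set.Ioo (0 : ℝ) 1) (hqt : qt ∈ Set.Ioo (0 : ℝ) 1)
    (pvec : Fin n → Fin n → ℝ)
    (hpvec : pvec = fun k i => if i = t then pt else if i = k then 1 - pt else 0)
    (qstar : Fin n → ℝ)
    (hqstar : qstar = fun i => if i = t then qt else (1 - qt) / ((n : ℝ) - 1)) :
    (∀ q : Fin n → ℝ, (∀ i, q i ∈ Set.Ioo (0 : ℝ) 1) → q t = qt →
        ∑ i ∈ Finset.univ.erase t, q i = 1 - qt →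
        (1 / ((n : ℝ) - 1)) * ∑ k ∈ Finset.univ.erase t, DCE (pvec k) q ≥
          (1 / ((n : ℝ) - 1)) * ∑ k ∈ Finset.univ.erase t, DCE (pvec k) qstar) ∧
    (∀ p : Fin n → ℝ, (∀ i, p i ∈ Set.Icc (0 : ℝ) 1) → p t = pt →
        ∑ i ∈ Finset.univ.erase t, p i = 1 - pt →
        DCE p qstar ≤
          (1 / ((n : ℝ) - 1)) * ∑ k ∈ Finset.univ.erase t, DCE (pvec k) qstar) := by
  have hn1 : (0:ℝ) < (n:ℝ) - 1 := by
    have : (2:ℝ) < n := by exact_mod_cast hn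
    linarith
  set c : ℝ := (1 - qt) / ((n:ℝ) - 1) with hc
  have hqt1 : 0 < 1 - qt := by linarith [hqt.2]
  have hcpos : 0 < c := div_pos hqt1 hn1
  have hcard : ((Finset.univ.erase t).card : ℝ) = (n:ℝ) - 1 := by
    rw [Finset.card_erase_of_mem (mem_univ t), Finset.card_univ, Fintype.card_fin]
    have h1 : 1 ≤ n := by omega
    push_cast [Nat.cast_sub h1]
    ring
  have hsum_pvec : ∀ (q : Fin n → ℝ) (k : Fin n), k ≠ t →
      DCE (pvec k) q = -(pt * Real.log (q t) + (1 - pt) * Real.log (q k)) := by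
    intro q k hk
    unfold DCE
    congr 1
    rw [hpvec]
    rw [Fintype.sum_eq_add t k (Ne.symm hk)
      (by intro i hit; simp [hit.1, hit.2])]
    simp [hk]
  have hqstar_t : qstar t = qt := by simp [hqstar]
  have hqstar_k : ∀ k : Fin n, k ≠ t → qstar k = c := by
    intro k hk; simp [hqstar, hk]
  have hDstar : ∀ k ∈ Finset.univ.erase t, DCE (pvec k) qstar
      = -(pt * Real.log qt + (1 - pt) * Real.log c) := by
    intro k hk
    rw [hsum_pvec qstar k (mem_erase.mp hk).1, hqstar_t, hqstar_k k (mem_erase.mp hk).1]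
  have hRHSsum : ∑ k ∈ Finset.univ.erase t, DCE (pvec k) qstar
      = ((n:ℝ) - 1) * (-(pt * Real.log qt + (1 - pt) * Real.log c)) := by
    rw [Finset.sum_congr rfl hDstar, Finset.sum_const, nsmul_eq_mul, hcard]
  constructor
  · intro q hq hqt' hsum
    have key : ∑ k ∈ Finset.univ.erase t, Real.log (q k) ≤ ((n:ℝ)-1) * Real.log c := by
      have h1 : ∀ k ∈ Finset.univ.erase t,
          Real.log (q k) ≤ Real.log c + (q k / c - 1) := by
        intro k _
        have hq0 := (hq k).1
        have h2 := Real.log_le_sub_one_of_pos (div_pos hq0 hcpos)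
        rw [Real.log_div (ne_of_gt hq0) (ne_of_gt hcpos)] at h2
        linarith
      calc ∑ k ∈ Finset.univ.erase t, Real.log (q k)
          ≤ ∑ k ∈ Finset.univ.erase t, (Real.log c + (q k / c - 1)) :=
            Finset.sum_le_sum h1
        _ = ((n:ℝ)-1) * Real.log c := by
            rw [Finset.sum_add_distrib, Finset.sum_const, Finset.sum_sub_distrib,
              Finset.sum_const, ← Finset.sum_div, hsum, nsmul_eq_mul, nsmul_eq_mul, hcard]
            have hd : (1 - qt) / c = (n:ℝ) - 1 := by
              rw [hc]; field_simp
            rw [hd]; ring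
    have hLHSsum : ∑ k ∈ Finset.univ.erase t, DCE (pvec k) q
        = -(((n:ℝ)-1) * (pt * Real.log qt)
            + (1 - pt) * ∑ k ∈ Finset.univ.erase t, Real.log (q k)) := by
      rw [Finset.sum_congr rfl (fun k hk => hsum_pvec q k (mem_erase.mp hk).1), hqt']
      rw [Finset.sum_neg_distrib, Finset.sum_add_distrib, Finset.sum_const,
        ← Finset.mul_sum, nsmul_eq_mul, hcard]
    rw [ge_iff_le, hRHSsum, hLHSsum]
    have hpt1 : (0:ℝ) ≤ 1 - pt := by linarith [hpt.2]
    have hmul := mul_le_mul_of_nonneg_left key hpt1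
    have hpos : (0:ℝ) ≤ 1 / ((n:ℝ) - 1) := by positivity
    apply mul_le_mul_of_nonneg_left _ hpos
    nlinarith [hmul]
  · intro p hp hpt' hsum
    have hval : DCE p qstar = -(pt * Real.log qt + (1 - pt) * Real.log c) := by
      unfold DCE
      congr 1
      rw [← Finset.sum_erase_add _ _ (mem_univ t), hqstar_t, hpt']
      have hcg : ∀ k ∈ Finset.univ.erase t,
          p k * Real.log (qstar k) = p k * Real.log c := by
        intro k hk; rw [hqstar_k k (mem_erase.mp hk).1]
      rw [Finset.sum_congr rfl hcg, ← Finset.sum_mul, hsum]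
      ring
    rw [hval, hRHSsum]
    apply le_of_eq
    rw [one_div, inv_mul_cancel_left₀ (ne_of_gt hn1)]
end

section
/- Let n > 2, let t ∈ {1,…,n}, and let p_t, q_t ∈ (0,1). Then min over q in the closed model action set {q ∈ ℝ^n : q_i ∈ (0,1) for all i, q at index t equals q_t, Σ_{i≠t} q_i = 1 − q_t} of the quantity sup over p in the adversary action set {p ∈ ℝ^n : p_i ∈ (0,1) for all i, p at index t equals p_t, Σ_{i≠t} p_i = 1 − p_t} of D_CE(p‖q) equals −p_t log q_t − (1−p_t) log((1−q_t)/(n−1)), and this minimax value is attained exactly at q* given by q*_t = q_t and q*_i = (1−q_t)/(n−1) for i ≠ t. -/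
open Finset

lemma card_er {n : ℕ} (t : Fin n) : (Finset.univ.erase t).card = n - 1 := by simp

lemma er_ne {n : ℕ} (hn : 2 < n) (t : Fin n) : (Finset.univ.erase t).Nonempty := by
  rw [← Finset.card_pos, card_er]; omega

lemma minNT_le {n : ℕ} (hn : 2 < n) (t : Fin n) (q : Fin n → ℝ) {i : Fin n} (hi : i ≠ t) :
    minNT hn t q ≤ q i := Finset.inf'_le _ (by simp [hi])

lemma minNT_exists {n : ℕ} (hn : 2 < n) (t : Fin n) (q : Fin n → ℝ) :
    ∃ i, i ≠ t ∧ minNT hn t q = q i := by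
  obtain ⟨i, hi, he⟩ := Finset.exists_mem_eq_inf' (er_ne hn t) q
  exact ⟨i, (Finset.mem_erase.mp hi).1, he⟩

lemma minNT_pos {n : ℕ} (hn : 2 < n) (t : Fin n) (q : Fin n → ℝ) (hq : ∀ i, 0 < q i) :
    0 < minNT hn t q := by
  obtain ⟨i, _, he⟩ := minNT_exists hn t q
  rw [he]; exact hq i

lemma sup_DCE {n : ℕ} (hn : 2 < n) (t : Fin n) {pt : ℝ} (hpt : pt ∈ Set.Ioo (0:ℝ) 1)
    (q : Fin n → ℝ) (hq : ∀ i, q i ∈ Set.Ioo (0:ℝ) 1) :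
    IsLUB ((fun p => DCE p q) ''
      {p : Fin n → ℝ | (∀ i, p i ∈ Set.Ioo (0 : ℝ) 1) ∧ p t = pt ∧
        ∑ i ∈ Finset.univ.erase t, p i = 1 - pt})
      (-pt * Real.log (q t) - (1 - pt) * Real.log (minNT hn t q)) := by
  obtain ⟨hpt0, hpt1⟩ := hpt
  set m := minNT hn t q with hm
  have hm0 : 0 < m := minNT_pos hn t q (fun i => (hq i).1)
  constructor
  · rintro v ⟨p, ⟨hp01, hptt, hpsum⟩, rfl⟩
    have hsplit : ∑ i, p i * Real.log (q i)
        = p t * Real.log (q t) + ∑ i ∈ univ.erase t, p i * Real.log (q i) :=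
      (Finset.add_sum_erase _ _ (mem_univ t)).symm
    have hbnd : ∀ i ∈ univ.erase t, p i * Real.log m ≤ p i * Real.log (q i) := by
      intro i hi
      exact mul_le_mul_of_nonneg_left
        (Real.log_le_log hm0 (minNT_le hn t q (mem_erase.mp hi).1)) (le_of_lt (hp01 i).1)
    have h2 : (1 - pt) * Real.log m ≤ ∑ i ∈ univ.erase t, p i * Real.log (q i) := by
      calc (1 - pt) * Real.log m = ∑ i ∈ univ.erase t, p i * Real.log m := by
            rw [← Finset.sum_mul, hpsum]
        _ ≤ _ := Finset.sum_le_sum hbnd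
    simp only [DCE, hsplit, hptt]
    linarith
  · intro b hb
    apply le_of_forall_pos_le_add
    intro ε hε
    obtain ⟨i0, hi0t, hi0⟩ := minNT_exists hn t q
    set C : ℝ := ∑ i ∈ univ.erase t, (Real.log (q i) - Real.log m) with hC
    have hC0 : 0 ≤ C := Finset.sum_nonneg (fun i hi => by
      have := Real.log_le_log hm0 (minNT_le hn t q (mem_erase.mp hi).1)
      linarith)
    have h3n : (3:ℝ) ≤ n := by exact_mod_cast hn
    have hn2 : (1:ℝ) ≤ (n:ℝ) - 2 := by linarith
    have hne : ((n:ℝ)-1) ≠ 0 := by linarith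
    set δ : ℝ := min (ε/(C+1)) ((1-pt)/(2*((n:ℝ)-1))) with hδ
    have hδ0 : 0 < δ := lt_min (div_pos hε (by linarith)) (div_pos (by linarith) (by linarith))
    have hδ2 : ((n:ℝ)-2)*δ ≤ (1-pt)/2 := by
      have h1 : δ ≤ (1-pt)/(2*((n:ℝ)-1)) := min_le_right _ _
      have h2 : ((n:ℝ)-2)*δ ≤ ((n:ℝ)-1)*δ :=
        mul_le_mul_of_nonneg_right (by linarith) hδ0.le
      have h4 : ((n:ℝ)-1)*δ ≤ ((n:ℝ)-1)*((1-pt)/(2*((n:ℝ)-1))) :=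
        mul_le_mul_of_nonneg_left h1 (by linarith)
      have h3 : ((n:ℝ)-1)*((1-pt)/(2*((n:ℝ)-1))) = (1-pt)/2 := by
        field_simp
      linarith
    have hδ1 : δ < 1 := by
      have h1 : δ ≤ (1-pt)/(2*((n:ℝ)-1)) := min_le_right _ _
      have h5 : (1-pt)/(2*((n:ℝ)-1)) < 1 := by
        rw [div_lt_one (by linarith)]
        linarith
      linarith
    have hnd0 : 0 ≤ ((n:ℝ)-2)*δ := mul_nonneg (by linarith) hδ0.le
    set p : Fin n → ℝ := fun i => if i = t then pt else if i = i0 then (1-pt) - ((n:ℝ)-2)*δ else δ with hp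
    have hpi0 : p i0 = (1-pt) - ((n:ℝ)-2)*δ := by simp [hp, hi0t]
    have hptt : p t = pt := by simp [hp]
    have hi0mem : i0 ∈ univ.erase t := mem_erase.mpr ⟨hi0t, mem_univ i0⟩
    have hcard : ((univ.erase t).erase i0).card = n - 2 := by
      rw [Finset.card_erase_of_mem hi0mem, card_er]; omega
    have hcast : ((n - 2 : ℕ) : ℝ) = (n:ℝ) - 2 := by
      have h : 2 ≤ n := by omega
      push_cast [h]; ring
    have hrest : ∀ i ∈ (univ.erase t).erase i0, p i = δ := by
      intro i hi
      obtain ⟨hii0, hit⟩ := mem_erase.mp hi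
      simp [hp, hii0, (mem_erase.mp hit).1]
    have hpsum : ∑ i ∈ univ.erase t, p i = 1 - pt := by
      rw [← Finset.add_sum_erase _ _ hi0mem, hpi0,
        Finset.sum_congr rfl hrest, Finset.sum_const, hcard, nsmul_eq_mul, hcast]
      ring
    have hpmem : ∀ i, p i ∈ Set.Ioo (0:ℝ) 1 := by
      intro i
      by_cases h1 : i = t
      · simp [hp, h1]; exact ⟨hpt0, hpt1⟩
      by_cases h2 : i = i0
      · simp [hp, h2, hi0t]
        constructor <;> linarith
      · simp [hp, h1, h2]
        exact ⟨hδ0, hδ1⟩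
    -- compute DCE p q
    have hlog1 : ∑ i ∈ (univ.erase t).erase i0, p i * Real.log (q i)
        = δ * ∑ i ∈ (univ.erase t).erase i0, Real.log (q i) := by
      rw [Finset.mul_sum]
      exact Finset.sum_congr rfl (fun i hi => by rw [hrest i hi])
    have hlog2 : ∑ i ∈ univ.erase t, Real.log (q i)
        = Real.log m + ∑ i ∈ (univ.erase t).erase i0, Real.log (q i) := by
      rw [← Finset.add_sum_erase _ _ hi0mem, hm, hi0]
    have hCdef : C = (∑ i ∈ univ.erase t, Real.log (q i)) - ((n:ℝ)-1) * Real.log m := by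
      rw [hC, Finset.sum_sub_distrib, Finset.sum_const, card_er, nsmul_eq_mul]
      have hc1 : ((n - 1 : ℕ) : ℝ) = (n:ℝ) - 1 := by
        have h : 1 ≤ n := by omega
        push_cast [h]; ring
      rw [hc1]
    have hDCE : DCE p q = -pt * Real.log (q t) - (1 - pt) * Real.log m - δ * C := by
      have hs : ∑ i, p i * Real.log (q i)
          = p t * Real.log (q t) + ∑ i ∈ univ.erase t, p i * Real.log (q i) :=
        (Finset.add_sum_erase _ _ (mem_univ t)).symm
      have hs2 : ∑ i ∈ univ.erase t, p i * Real.log (q i)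
          = p i0 * Real.log (q i0) + ∑ i ∈ (univ.erase t).erase i0, p i * Real.log (q i) :=
        (Finset.add_sum_erase _ _ hi0mem).symm
      rw [DCE, hs, hs2, hlog1, hptt, hpi0, ← hm.trans hi0]
      have hrw : ∑ i ∈ (univ.erase t).erase i0, Real.log (q i)
          = C + ((n:ℝ)-1) * Real.log m - Real.log m := by
        rw [hCdef, hlog2]; ring
      rw [hrw]; ring
    have hle : DCE p q ≤ b := hb ⟨p, ⟨hpmem, hptt, hpsum⟩, rfl⟩
    have hδC : δ * C ≤ ε := by
      have h1 : δ ≤ ε/(C+1) := min_le_left _ _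
      have h2 : δ * C ≤ (ε/(C+1)) * C := mul_le_mul_of_nonneg_right h1 hC0
      have h3 : (ε/(C+1)) * C ≤ ε := by
        rw [div_mul_eq_mul_div, div_le_iff₀ (by linarith : (0:ℝ) < C + 1)]
        nlinarith
      linarith
    rw [hDCE] at hle
    linarith

lemma minNT_le_avg {n : ℕ} (hn : 2 < n) (t : Fin n) (q : Fin n → ℝ) {d : ℝ}
    (hs : ∑ i ∈ Finset.univ.erase t, q i = d) :
    ((n:ℝ)-1) * minNT hn t q ≤ d := by
  have h := Finset.sum_le_sum (s := univ.erase t) (f := fun _ => minNT hn t q) (g := q)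
    (fun i hi => minNT_le hn t q (mem_erase.mp hi).1)
  rw [Finset.sum_const, card_er, nsmul_eq_mul] at h
  have hc : ((n-1:ℕ):ℝ) = (n:ℝ)-1 := by
    have h1 : 1 ≤ n := by omega
    push_cast [h1]; ring
  rw [hc, hs] at h
  exact h

lemma unif_mem {n : ℕ} (hn : 2 < n) (t : Fin n) {a : ℝ} (ha : a ∈ Set.Ioo (0:ℝ) 1) :
    (∀ i, (fun i => if i = t then a else (1-a)/((n:ℝ)-1)) i ∈ Set.Ioo (0:ℝ) 1) ∧
    (fun i => if i = t then a else (1-a)/((n:ℝ)-1)) t = a ∧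
    ∑ i ∈ Finset.univ.erase t, (fun i => if i = t then a else (1-a)/((n:ℝ)-1)) i = 1 - a := by
  obtain ⟨ha0, ha1⟩ := ha
  have hn1 : (0:ℝ) < (n:ℝ) - 1 := by
    have : (2:ℝ) < n := by exact_mod_cast hn
    linarith
  have hv0 : 0 < (1-a)/((n:ℝ)-1) := div_pos (by linarith) hn1
  have hv1 : (1-a)/((n:ℝ)-1) < 1 := by
    rw [div_lt_one hn1]
    have : (2:ℝ) < n := by exact_mod_cast hn
    linarith
  refine ⟨fun i => ?_, by simp, ?_⟩
  · by_cases h : i = t <;> simp [h, ha0, ha1, hv0, hv1]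
  · rw [Finset.sum_congr rfl (fun i hi => if_neg (Finset.mem_erase.mp hi).1)]
    rw [Finset.sum_const, card_er, nsmul_eq_mul]
    have : ((n - 1 : ℕ) : ℝ) = (n:ℝ) - 1 := by
      have : 1 ≤ n := by omega
      push_cast [this]; ring
    rw [this]
    field_simp

theorem statement_9 (n : ℕ) (hn : 2 < n) (t : Fin n)
    (pt qt : ℝ) (hpt : pt ∈ Set.Ioo (0 : ℝ) 1) (hqt : qt ∈ Set.Ioo (0 : ℝ) 1)
    (AP : Set (Fin n → ℝ))
    (hAP : AP = {p : Fin n → ℝ | (∀ i, p i ∈ Set.Ioo (0 : ℝ) 1) ∧ p t = pt ∧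
      ∑ i ∈ Finset.univ.erase t, p i = 1 - pt})
    (AQ : Set (Fin n → ℝ))
    (hAQ : AQ = {q : Fin n → ℝ | (∀ i, q i ∈ Set.Ioo (0 : ℝ) 1) ∧ q t = qt ∧
      ∑ i ∈ Finset.univ.erase t, q i = 1 - qt})
    (qstar : Fin n → ℝ)
    (hqstar : qstar = fun i => if i = t then qt else (1 - qt) / ((n : ℝ) - 1)) :
    IsLeast ((fun q => sSup ((fun p => DCE p q) '' AP)) '' AQ)
      (-pt * Real.log qt - (1 - pt) * Real.log ((1 - qt) / ((n : ℝ) - 1))) ∧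
    (∀ q ∈ AQ, (sSup ((fun p => DCE p q) '' AP) =
        -pt * Real.log qt - (1 - pt) * Real.log ((1 - qt) / ((n : ℝ) - 1)) ↔
      q = qstar)) := by
  obtain ⟨hpt0, hpt1⟩ := hpt
  obtain ⟨hqt0, hqt1⟩ := hqt
  have h3n : (3:ℝ) ≤ n := by exact_mod_cast hn
  have hn1 : (0:ℝ) < (n:ℝ) - 1 := by linarith
  have hd0 : (0:ℝ) < (1 - qt) / ((n:ℝ)-1) := div_pos (by linarith) hn1
  -- AP is nonempty
  have hAPne : AP.Nonempty := by
    rw [hAP]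
    exact ⟨_, unif_mem hn t ⟨hpt0, hpt1⟩⟩
  -- the sup for each q ∈ AQ
  have key : ∀ q ∈ AQ, sSup ((fun p => DCE p q) '' AP)
      = -pt * Real.log qt - (1 - pt) * Real.log (minNT hn t q) := by
    intro q hq
    rw [hAQ] at hq
    obtain ⟨hq01, hqtt, hqs⟩ := hq
    have hlub := sup_DCE hn t ⟨hpt0, hpt1⟩ q hq01
    rw [hqtt] at hlub
    rw [hAP] at hAPne ⊢
    exact hlub.csSup_eq (hAPne.image _)
  -- qstar ∈ AQ and minNT of qstar
  have hqsAQ : qstar ∈ AQ := by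
    rw [hAQ, hqstar]
    exact unif_mem hn t ⟨hqt0, hqt1⟩
  have hminqs : minNT hn t qstar = (1 - qt) / ((n:ℝ)-1) := by
    obtain ⟨i0, hi0t, hi0⟩ := minNT_exists hn t qstar
    rw [hi0, hqstar]
    simp [hi0t]
  -- positivity and bound for minNT of any q ∈ AQ
  have hkey2 : ∀ q ∈ AQ, 0 < minNT hn t q ∧ minNT hn t q ≤ (1 - qt) / ((n:ℝ)-1) := by
    intro q hq
    rw [hAQ] at hq
    obtain ⟨hq01, hqtt, hqs⟩ := hq
    refine ⟨minNT_pos hn t q (fun i => (hq01 i).1), ?_⟩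
    have := minNT_le_avg hn t q hqs
    rw [le_div_iff₀ hn1]
    linarith
  constructor
  · constructor
    · exact ⟨qstar, hqsAQ, by dsimp only; rw [key qstar hqsAQ, hminqs]⟩
    · rintro v ⟨q, hqAQ, rfl⟩
      dsimp only
      rw [key q hqAQ]
      obtain ⟨hm0, hmle⟩ := hkey2 q hqAQ
      have hlog : Real.log (minNT hn t q) ≤ Real.log ((1 - qt) / ((n:ℝ)-1)) :=
        Real.log_le_log hm0 hmle
      have := mul_le_mul_of_nonneg_left hlog (by linarith : (0:ℝ) ≤ 1 - pt)
      linarith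
  · intro q hqAQ
    rw [key q hqAQ]
    obtain ⟨hm0, hmle⟩ := hkey2 q hqAQ
    constructor
    · intro h
      have h1 : (1 - pt) * Real.log (minNT hn t q)
          = (1 - pt) * Real.log ((1 - qt) / ((n:ℝ)-1)) := by linarith
      have h2 : Real.log (minNT hn t q) = Real.log ((1 - qt) / ((n:ℝ)-1)) :=
        mul_left_cancel₀ (by linarith : (1:ℝ) - pt ≠ 0) h1
      have hmeq : minNT hn t q = (1 - qt) / ((n:ℝ)-1) :=
        Real.log_injOn_pos (Set.mem_Ioi.mpr hm0) (Set.mem_Ioi.mpr hd0) h2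
      -- all non-target coordinates equal the min
      rw [hAQ] at hqAQ
      obtain ⟨hq01, hqtt, hqs⟩ := hqAQ
      have hsum0 : ∑ i ∈ Finset.univ.erase t, (q i - minNT hn t q) = 0 := by
        rw [Finset.sum_sub_distrib, Finset.sum_const, card_er, nsmul_eq_mul]
        have hc : ((n-1:ℕ):ℝ) = (n:ℝ)-1 := by
          have h1 : 1 ≤ n := by omega
          push_cast [show 1 ≤ n by omega]; ring
        rw [hc, hqs, hmeq]
        field_simp
        ring
      have hall := (Finset.sum_eq_zero_iff_of_nonneg
        (fun i hi => by
          have := minNT_le hn t q (mem_erase.mp hi).1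
          linarith)).mp hsum0
      funext i
      by_cases hit : i = t
      · rw [hit, hqtt, hqstar]; simp
      · have := hall i (mem_erase.mpr ⟨hit, mem_univ i⟩)
        rw [hqstar]
        simp only [hit, if_false]
        have : q i = minNT hn t q := by linarith
        rw [this, hmeq]
    · intro h
      rw [h, hminqs]
end
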